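/- (Necessity direction of Theorem 1, equation (4.3).) Let X ⊆ ℝⁿ, let u_i : ℝⁿ → ℝᵐ and w_i : ℝⁿ → ℝ^q be continuous policies, and let V : ℝⁿ → ℝ be continuously differentiable and satisfy the linear PDE (LFE) at every point of X. Let f, g, k, h be continuous, let u : ℝ → ℝᵐ and w : ℝ → ℝ^q be continuous, let t ∈ ℝ and Δt > 0, and let x : ℝ → ℝⁿ be differentiable on [t, t+Δt] with x(τ) ∈ X and x'(τ) = f(x(τ)) + g(x(τ))·u(τ) + k(x(τ))·w(τ) for all τ ∈ [t, t+Δt]. Then ∫ₜ^{t+Δt} ⟨∇V(x(τ)), g(x(τ))·(u(τ) − u_i(x(τ)))⟩ dτ + ∫ₜ^{t+Δt} ⟨∇V(x(τ)), k(x(τ))·(w(τ) − w_i(x(τ)))⟩ dτ + V(x(t)) − V(x(t+Δt)) = ∫ₜ^{t+Δt} (‖h(x(τ))‖² + ⟨u_i(x(τ)), R·u_i(x(τ))⟩ − γ²·‖w_i(x(τ))‖²) dτ. -/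

import Mathlib

open Matrix MeasureTheory

/-- Matrix–vector multiplication, valued in Euclidean space. -/
noncomputable def mv {a b : ℕ} (M : Matrix (Fin a) (Fin b) ℝ)
    (v : EuclideanSpace ℝ (Fin b)) : EuclideanSpace ℝ (Fin a) :=
  WithLp.toLp 2 (M.mulVec v)

/-- `V` satisfies the linear PDE (LFE) for the policies `ui, wi` at the point `x`:
`⟨∇V(x), f(x) + g(x) uᵢ(x) + k(x) wᵢ(x)⟩ + ‖h(x)‖² + ⟨uᵢ(x), R uᵢ(x)⟩ - γ²‖wᵢ(x)‖² = 0`. -/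
def LFEAt {n m q p : ℕ}
    (f : EuclideanSpace ℝ (Fin n) → EuclideanSpace ℝ (Fin n))
    (g : EuclideanSpace ℝ (Fin n) → Matrix (Fin n) (Fin m) ℝ)
    (k : EuclideanSpace ℝ (Fin n) → Matrix (Fin n) (Fin q) ℝ)
    (h : EuclideanSpace ℝ (Fin n) → EuclideanSpace ℝ (Fin p))
    (R : Matrix (Fin m) (Fin m) ℝ) (γ : ℝ)
    (ui : EuclideanSpace ℝ (Fin n) → EuclideanSpace ℝ (Fin m))
    (wi : EuclideanSpace ℝ (Fin n) → EuclideanSpace ℝ (Fin q))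
    (V : EuclideanSpace ℝ (Fin n) → ℝ)
    (x : EuclideanSpace ℝ (Fin n)) : Prop :=
  (inner ℝ (gradient V x) (f x + mv (g x) (ui x) + mv (k x) (wi x)) : ℝ)
    + ‖h x‖^2 + (inner ℝ (ui x) (mv R (ui x)) : ℝ) - γ^2 * ‖wi x‖^2 = 0

/-- `V` satisfies the off-policy integral identity (equation (4.3)) for the policies
`ui, wi` along the trajectory `(x, u, w)` on the interval `[t₁, t₂]`. -/
noncomputable def OffPolicyId {n m q p : ℕ}
    (g : EuclideanSpace ℝ (Fin n) → Matrix (Fin n) (Fin m) ℝ)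
    (k : EuclideanSpace ℝ (Fin n) → Matrix (Fin n) (Fin q) ℝ)
    (h : EuclideanSpace ℝ (Fin n) → EuclideanSpace ℝ (Fin p))
    (R : Matrix (Fin m) (Fin m) ℝ) (γ : ℝ)
    (ui : EuclideanSpace ℝ (Fin n) → EuclideanSpace ℝ (Fin m))
    (wi : EuclideanSpace ℝ (Fin n) → EuclideanSpace ℝ (Fin q))
    (V : EuclideanSpace ℝ (Fin n) → ℝ)
    (x : ℝ → EuclideanSpace ℝ (Fin n))
    (u : ℝ → EuclideanSpace ℝ (Fin m))
    (w : ℝ → EuclideanSpace ℝ (Fin q))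
    (t₁ t₂ : ℝ) : Prop :=
  (∫ τ in t₁..t₂, (inner ℝ (gradient V (x τ)) (mv (g (x τ)) (u τ - ui (x τ))) : ℝ))
    + (∫ τ in t₁..t₂, (inner ℝ (gradient V (x τ)) (mv (k (x τ)) (w τ - wi (x τ))) : ℝ))
    + V (x t₁) - V (x t₂)
    = ∫ τ in t₁..t₂,
        (‖h (x τ)‖^2 + (inner ℝ (ui (x τ)) (mv R (ui (x τ))) : ℝ) - γ^2 * ‖wi (x τ)‖^2)

/-- **Necessity direction of Theorem 1 (equation (4.3)).**  If `V` is continuously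
differentiable and satisfies the linear PDE (LFE) at every point of `X`, then along any
trajectory of `x' = f(x) + g(x) u(τ) + k(x) w(τ)` remaining in `X` on `[t, t+Δt]`, the
off-policy integral identity holds. -/
theorem off_policy_identity_of_lfe {n m q p : ℕ}
    (f : EuclideanSpace ℝ (Fin n) → EuclideanSpace ℝ (Fin n))
    (g : EuclideanSpace ℝ (Fin n) → Matrix (Fin n) (Fin m) ℝ)
    (k : EuclideanSpace ℝ (Fin n) → Matrix (Fin n) (Fin q) ℝ)
    (h : EuclideanSpace ℝ (Fin n) → EuclideanSpace ℝ (Fin p))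
    (R : Matrix (Fin m) (Fin m) ℝ) (hR : R.PosDef)
    (γ : ℝ) (hγ : 0 < γ)
    (X : Set (EuclideanSpace ℝ (Fin n)))
    (ui : EuclideanSpace ℝ (Fin n) → EuclideanSpace ℝ (Fin m)) (hui : Continuous ui)
    (wi : EuclideanSpace ℝ (Fin n) → EuclideanSpace ℝ (Fin q)) (hwi : Continuous wi)
    (V : EuclideanSpace ℝ (Fin n) → ℝ) (hV : ContDiff ℝ 1 V)
    (hLFE : ∀ y ∈ X, LFEAt f g k h R γ ui wi V y)
    (hf : Continuous f) (hg : Continuous g) (hk : Continuous k) (hh : Continuous h)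
    (u : ℝ → EuclideanSpace ℝ (Fin m)) (hu : Continuous u)
    (w : ℝ → EuclideanSpace ℝ (Fin q)) (hw : Continuous w)
    (t Δt : ℝ) (hΔt : 0 < Δt)
    (x : ℝ → EuclideanSpace ℝ (Fin n))
    (hxX : ∀ τ ∈ Set.Icc t (t + Δt), x τ ∈ X)
    (hx : ∀ τ ∈ Set.Icc t (t + Δt), HasDerivAt x
      (f (x τ) + mv (g (x τ)) (u τ) + mv (k (x τ)) (w τ)) τ) :
    OffPolicyId g k h R γ ui wi V x u w t (t + Δt) := by

  classical
  set t₂ := t + Δt with ht₂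
  have ht12 : t ≤ t₂ := by simp [ht₂]; linarith
  have huIcc : Set.uIcc t t₂ = Set.Icc t t₂ := Set.uIcc_of_le ht12
  -- continuity of x on the interval
  have hxc : ContinuousOn x (Set.Icc t t₂) := fun τ hτ =>
    ((hx τ hτ).continuousAt).continuousWithinAt
  -- continuity of the gradient
  have hgradc : Continuous (fun y => gradient V y) := by
    have hfd := hV.continuous_fderiv one_ne_zero
    exact (InnerProductSpace.toDual ℝ _).symm.continuous.comp hfd
  have hinner : ∀ (y v : EuclideanSpace ℝ (Fin n)),
      (inner ℝ (gradient V y) v : ℝ) = fderiv ℝ V y v := fun y v =>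
    InnerProductSpace.toDual_symm_apply
  -- continuity of mv as a function of the pair
  have hmvp : ∀ {a b : ℕ}, Continuous
      (fun pr : Matrix (Fin a) (Fin b) ℝ × EuclideanSpace ℝ (Fin b) => mv pr.1 pr.2) := by
    intro a b
    have h1 : Continuous (fun pr : Matrix (Fin a) (Fin b) ℝ × EuclideanSpace ℝ (Fin b) =>
        pr.1 *ᵥ (fun i => pr.2 i)) := by
      apply Continuous.matrix_mulVec continuous_fst
      exact continuous_pi fun i => (continuous_apply i).comp
        ((PiLp.continuous_ofLp 2 _).comp continuous_snd)
    exact (PiLp.continuous_toLp 2 _).comp h1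
  have hmv : ∀ {a b : ℕ} (M : ℝ → Matrix (Fin a) (Fin b) ℝ)
      (v : ℝ → EuclideanSpace ℝ (Fin b)) (s : Set ℝ), ContinuousOn M s → ContinuousOn v s →
      ContinuousOn (fun τ => mv (M τ) (v τ)) s := by
    intro a b M v s hM hv
    exact hmvp.comp_continuousOn (hM.prodMk hv)
  -- the four integrands
  set A : ℝ → ℝ := fun τ =>
    (inner ℝ (gradient V (x τ)) (mv (g (x τ)) (u τ - ui (x τ))) : ℝ) with hA
  set B : ℝ → ℝ := fun τ =>
    (inner ℝ (gradient V (x τ)) (mv (k (x τ)) (w τ - wi (x τ))) : ℝ) with hB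
  set C : ℝ → ℝ := fun τ =>
    (‖h (x τ)‖^2 + (inner ℝ (ui (x τ)) (mv R (ui (x τ))) : ℝ) - γ^2 * ‖wi (x τ)‖^2) with hC
  set D : ℝ → ℝ := fun τ =>
    (inner ℝ (gradient V (x τ)) (f (x τ) + mv (g (x τ)) (u τ) + mv (k (x τ)) (w τ)) : ℝ) with hD
  have hgxc : ContinuousOn (fun τ => gradient V (x τ)) (Set.Icc t t₂) :=
    hgradc.comp_continuousOn hxc
  -- continuity of the integrands on the interval
  have hAc : ContinuousOn A (Set.Icc t t₂) :=
    hgxc.inner (hmv _ _ _ (hg.comp_continuousOn hxc)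
      (hu.continuousOn.sub (hui.comp_continuousOn hxc)))
  have hBc : ContinuousOn B (Set.Icc t t₂) :=
    hgxc.inner (hmv _ _ _ (hk.comp_continuousOn hxc)
      (hw.continuousOn.sub (hwi.comp_continuousOn hxc)))
  have hCc : ContinuousOn C (Set.Icc t t₂) := by
    apply ContinuousOn.sub
    · apply ContinuousOn.add
      · exact (((hh.comp_continuousOn hxc).norm).pow 2)
      · exact (hui.comp_continuousOn hxc).inner
          (hmv _ _ _ continuousOn_const (hui.comp_continuousOn hxc))
    · exact continuousOn_const.mul (((hwi.comp_continuousOn hxc).norm).pow 2)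
  have hDc : ContinuousOn D (Set.Icc t t₂) := by
    apply hgxc.inner
    apply ContinuousOn.add
    · apply ContinuousOn.add (hf.comp_continuousOn hxc)
      exact hmv _ _ _ (hg.comp_continuousOn hxc) hu.continuousOn
    · exact hmv _ _ _ (hk.comp_continuousOn hxc) hw.continuousOn
  -- interval integrability
  have hAi : IntervalIntegrable A MeasureTheory.volume t t₂ :=
    (hAc.mono huIcc.subset).intervalIntegrable
  have hBi : IntervalIntegrable B MeasureTheory.volume t t₂ :=
    (hBc.mono huIcc.subset).intervalIntegrable
  have hCi : IntervalIntegrable C MeasureTheory.volume t t₂ :=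
    (hCc.mono huIcc.subset).intervalIntegrable
  have hDi : IntervalIntegrable D MeasureTheory.volume t t₂ :=
    (hDc.mono huIcc.subset).intervalIntegrable
  -- pointwise identity on the interval : A + B = D + C
  have hpt : ∀ τ ∈ Set.Icc t t₂, A τ + B τ = D τ + C τ := by
    intro τ hτ
    have hlfe := hLFE (x τ) (hxX τ hτ)
    unfold LFEAt at hlfe
    have hsplit : mv (g (x τ)) (u τ - ui (x τ)) + mv (k (x τ)) (w τ - wi (x τ)) =
        (f (x τ) + mv (g (x τ)) (u τ) + mv (k (x τ)) (w τ)) -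
        (f (x τ) + mv (g (x τ)) (ui (x τ)) + mv (k (x τ)) (wi (x τ))) := by
      have mvs : ∀ {a b : ℕ} (M : Matrix (Fin a) (Fin b) ℝ)
          (v₁ v₂ : EuclideanSpace ℝ (Fin b)), mv M (v₁ - v₂) = mv M v₁ - mv M v₂ := by
        intro a b M v₁ v₂
        ext i
        simp [mv, Matrix.mulVec_sub]
      rw [mvs, mvs]
      abel
    have : A τ + B τ = D τ -
        (inner ℝ (gradient V (x τ))
          (f (x τ) + mv (g (x τ)) (ui (x τ)) + mv (k (x τ)) (wi (x τ))) : ℝ) := by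
      rw [hA, hB, hD]
      simp only [← inner_add_right, hsplit, inner_sub_right]
    rw [this]
    have hCτ : C τ = ‖h (x τ)‖ ^ 2 + (inner ℝ (ui (x τ)) (mv R (ui (x τ))) : ℝ)
        - γ ^ 2 * ‖wi (x τ)‖ ^ 2 := rfl
    rw [hCτ]
    linarith
  -- fundamental theorem of calculus for V ∘ x, with derivative D
  have hftc : ∫ τ in t..t₂, D τ = V (x t₂) - V (x t) := by
    refine intervalIntegral.integral_eq_sub_of_hasDerivAt
      (f := fun τ => V (x τ)) ?_ hDi
    · intro τ hτ
      rw [huIcc] at hτ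
      have hVd : HasFDerivAt V (fderiv ℝ V (x τ)) (x τ) :=
        (hV.differentiable one_ne_zero (x τ)).hasFDerivAt
      have := hVd.comp_hasDerivAt τ (hx τ hτ)
      rw [hD]
      simpa [hinner, Function.comp_def] using this
  -- assemble
  have hABsum : (∫ τ in t..t₂, A τ) + (∫ τ in t..t₂, B τ)
      = (∫ τ in t..t₂, D τ) + (∫ τ in t..t₂, C τ) := by
    rw [← intervalIntegral.integral_add hAi hBi, ← intervalIntegral.integral_add hDi hCi]
    apply intervalIntegral.integral_congr
    intro τ hτ
    rw [huIcc] at hτ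
    exact hpt τ hτ
  unfold OffPolicyId
  rw [show (∫ τ in t..t₂, (inner ℝ (gradient V (x τ)) (mv (g (x τ)) (u τ - ui (x τ))) : ℝ))
      = ∫ τ in t..t₂, A τ from rfl,
    show (∫ τ in t..t₂, (inner ℝ (gradient V (x τ)) (mv (k (x τ)) (w τ - wi (x τ))) : ℝ))
      = ∫ τ in t..t₂, B τ from rfl,
    show (∫ τ in t..t₂, (‖h (x τ)‖^2 + (inner ℝ (ui (x τ)) (mv R (ui (x τ))) : ℝ)
      - γ^2 * ‖wi (x τ)‖^2)) = ∫ τ in t..t₂, C τ from rfl]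
  rw [hftc] at hABsum
  linarith
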